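/- (Stabilizer Brule's Rules) With Q, S, φ, ψ, ω, λ as in the stabilizer setting, a subset J ⊆ S is a syndrome (i.e., J ∈ im ψ) if and only if ω(C, J) = 0 for every constraint C ∈ ker φ. -/

import Mathlib

open scoped symmDiff

variable {Q : Type*} [DecidableEq Q]

instance powerSetAdd : Add (Finset Q) := ⟨fun A B => A ∆ B⟩

instance powerSetZero : Zero (Finset Q) := ⟨∅⟩

instance powerSetNeg : Neg (Finset Q) := ⟨fun A => A⟩

instance powerSetAddCommGroup : AddCommGroup (Finset Q) where
  add_assoc := symmDiff_assoc
  zero_add := bot_symmDiff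
  add_zero := symmDiff_bot
  neg_add_cancel := symmDiff_self
  add_comm := symmDiff_comm
  nsmul := nsmulRec
  zsmul := zsmulRec

instance powerSetModule : Module (ZMod 2) (Finset Q) :=
  AddCommGroup.zmodModule (by
    intro x
    rw [two_nsmul]
    exact symmDiff_self x)

/-- The form `ω(A,B) = |A ∩ B| mod 2`. -/
def omegaForm (A B : Finset Q) : ZMod 2 := ((A ∩ B).card : ZMod 2)

/-- The symplectic form on the Pauli space `℘(Q)²`. -/
def lamForm (F G : Finset Q × Finset Q) : ZMod 2 :=
  ((F.1 ∩ G.2).card : ZMod 2) + ((G.1 ∩ F.2).card : ZMod 2)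

variable {ι : Type*} [Fintype ι] [DecidableEq ι]

/-- `φ : ℘(S) → ℘(Q)²`, `A ↦ Σ_{s ∈ A} s` (product of the stabilizers in `A`). -/
def phiMap (s : ι → Finset Q × Finset Q) (A : Finset ι) : Finset Q × Finset Q :=
  ∑ i ∈ A, s i

/-- The syndrome map `ψ : ℘(Q)² → ℘(S)`, `f ↦ {s ∈ S : λ(s,f) = 1}`. -/
def psiMap (s : ι → Finset Q × Finset Q) (f : Finset Q × Finset Q) : Finset ι :=
  Finset.univ.filter fun i => lamForm (s i) f = 1

/- ----------------------- auxiliary lemmas ----------------------- -/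

lemma zmod2_cases (c : ZMod 2) : c = 0 ∨ c = 1 := by revert c; decide

lemma card_symmDiff_zmod {α : Type*} [DecidableEq α] (X Y : Finset α) :
    (((X ∆ Y).card : ZMod 2)) = (X.card : ZMod 2) + (Y.card : ZMod 2) := by
  have h3 : (X ∆ Y).card = (X \ Y).card + (Y \ X).card := by
    rw [symmDiff_def, Finset.sup_eq_union]
    exact Finset.card_union_of_disjoint (disjoint_sdiff_sdiff)
  have h1 := Finset.card_sdiff_add_card_inter X Y
  have h2 := Finset.card_sdiff_add_card_inter Y X
  rw [Finset.inter_comm] at h2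
  have h : (X ∆ Y).card + 2 * (X ∩ Y).card = X.card + Y.card := by omega
  have := congrArg (Nat.cast : ℕ → ZMod 2) h
  push_cast at this
  rw [show (2 : ZMod 2) = 0 by decide, zero_mul, add_zero] at this
  exact this

lemma lamForm_zero_left {Q : Type*} [DecidableEq Q] (H : Finset Q × Finset Q) :
    lamForm 0 H = 0 := by
  show lamForm (∅, ∅) H = 0
  simp [lamForm]

lemma lamForm_add_left {Q : Type*} [DecidableEq Q] (F G H : Finset Q × Finset Q) :
    lamForm (F + G) H = lamForm F H + lamForm G H := by
  show lamForm (F.1 ∆ G.1, F.2 ∆ G.2) H = _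
  unfold lamForm
  simp only []
  have e1 : (F.1 ∆ G.1) ∩ H.2 = (F.1 ∩ H.2) ∆ (G.1 ∩ H.2) := inf_symmDiff_distrib_right _ _ _
  have e2 : H.1 ∩ (F.2 ∆ G.2) = (H.1 ∩ F.2) ∆ (H.1 ∩ G.2) := inf_symmDiff_distrib_left _ _ _
  rw [e1, e2, card_symmDiff_zmod, card_symmDiff_zmod]
  ring

lemma lamForm_add_right {Q : Type*} [DecidableEq Q] (F G H : Finset Q × Finset Q) :
    lamForm H (F + G) = lamForm H F + lamForm H G := by
  show lamForm H (F.1 ∆ G.1, F.2 ∆ G.2) = _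
  unfold lamForm
  simp only []
  have e1 : H.1 ∩ (F.2 ∆ G.2) = (H.1 ∩ F.2) ∆ (H.1 ∩ G.2) := inf_symmDiff_distrib_left _ _ _
  have e2 : (F.1 ∆ G.1) ∩ H.2 = (F.1 ∩ H.2) ∆ (G.1 ∩ H.2) := inf_symmDiff_distrib_right _ _ _
  rw [e1, e2, card_symmDiff_zmod, card_symmDiff_zmod]
  ring

lemma lamForm_smul_left {Q : Type*} [DecidableEq Q] (c : ZMod 2) (F H : Finset Q × Finset Q) :
    lamForm (c • F) H = c * lamForm F H := by
  rcases zmod2_cases c with rfl | rfl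
  · rw [zero_smul, zero_mul, lamForm_zero_left]
  · rw [one_smul, one_mul]

lemma lamForm_smul_right {Q : Type*} [DecidableEq Q] (c : ZMod 2) (F H : Finset Q × Finset Q) :
    lamForm H (c • F) = c * lamForm H F := by
  rcases zmod2_cases c with rfl | rfl
  · rw [zero_smul, zero_mul]
    show lamForm H (∅, ∅) = 0
    simp [lamForm]
  · rw [one_smul, one_mul]

/-- `λ` as a bilinear form on `℘(Q)²`. -/
def lamBilin (Q : Type*) [DecidableEq Q] :
    LinearMap.BilinForm (ZMod 2) (Finset Q × Finset Q) :=
  LinearMap.mk₂ (ZMod 2) lamForm lamForm_add_left lamForm_smul_left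
    (fun m n₁ n₂ => lamForm_add_right n₁ n₂ m) (fun c m n => lamForm_smul_right c n m)

@[simp] lemma lamBilin_apply {Q : Type*} [DecidableEq Q] (F G : Finset Q × Finset Q) :
    lamBilin Q F G = lamForm F G := rfl

/-- Left nondegeneracy of `λ`. -/
lemma lamForm_nondeg {Q : Type*} [DecidableEq Q] (F : Finset Q × Finset Q)
    (h : ∀ G, lamForm F G = 0) : F = 0 := by
  have h1 : F.1 = ∅ := by
    ext q
    simp only [Finset.notMem_empty, iff_false]
    intro hq
    have := h (∅, {q})
    rw [lamForm] at this
    simp [Finset.inter_singleton_of_mem hq] at this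
  have h2 : F.2 = ∅ := by
    ext q
    simp only [Finset.notMem_empty, iff_false]
    intro hq
    have := h ({q}, ∅)
    rw [lamForm] at this
    simp [Finset.singleton_inter_of_mem hq] at this
  show F = ((∅ : Finset Q), (∅ : Finset Q))
  exact Prod.ext h1 h2

/-- The dot-product bilinear form on `ι → ZMod 2`. -/
def dotBilin (ι : Type*) [Fintype ι] : LinearMap.BilinForm (ZMod 2) (ι → ZMod 2) :=
  LinearMap.mk₂ (ZMod 2) (fun c d => ∑ i, c i * d i)
    (fun c c' d => by simp [add_mul, Finset.sum_add_distrib])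
    (fun r c d => by simp [Finset.mul_sum, mul_assoc])
    (fun c d d' => by simp [mul_add, Finset.sum_add_distrib])
    (fun r c d => by simp [Finset.mul_sum, mul_left_comm])

@[simp] lemma dotBilin_apply {ι : Type*} [Fintype ι] (c d : ι → ZMod 2) :
    dotBilin ι c d = ∑ i, c i * d i := rfl

lemma dotBilin_nondeg (ι : Type*) [Fintype ι] [DecidableEq ι] :
    (dotBilin ι).Nondegenerate := by
  refine ⟨fun c h => ?_, fun c h => ?_⟩
  · funext i
    have := h (Pi.single i 1)
    simp only [dotBilin_apply, Pi.single_apply, mul_ite, mul_one, mul_zero,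
      Finset.sum_ite_eq', Finset.mem_univ, if_true] at this
    simpa using this
  · funext i
    have := h (Pi.single i 1)
    simpa [Pi.single_apply] using this

lemma dotBilin_refl (ι : Type*) [Fintype ι] : (dotBilin ι).IsRefl := by
  intro c d h
  simpa [mul_comm] using h

/-- (Stabilizer Brule's Rules) `J ⊆ S` is a syndrome, i.e. `J ∈ im ψ`, if and
only if `ω(C, J) = 0` for every constraint `C ∈ ker φ`. -/
theorem stabilizer_brules_rules {Q ι : Type*} [DecidableEq Q] [Fintype ι] [DecidableEq ι]
    (s : ι → Finset Q × Finset Q) (hinj : Function.Injective s)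
    (hcomm : ∀ i j : ι, lamForm (s i) (s j) = 0) (J : Finset ι) :
    (∃ f : Finset Q × Finset Q, psiMap s f = J) ↔
      ∀ C : Finset ι, phiMap s C = 0 → omegaForm C J = 0 := by
  haveI : Fact (Nat.Prime 2) := ⟨Nat.prime_two⟩
  -- the key summation identity
  have hsum : ∀ (C : Finset ι) (f : Finset Q × Finset Q),
      lamForm (phiMap s C) f = ∑ i ∈ C, lamForm (s i) f := by
    intro C f
    rw [phiMap, ← lamBilin_apply, map_sum, LinearMap.sum_apply]
    rfl
  constructor
  · rintro ⟨f, rfl⟩ C hC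
    have hint : C ∩ psiMap s f = C.filter fun i => lamForm (s i) f = 1 := by
      ext i; simp [psiMap, Finset.mem_filter, and_comm]
    have : omegaForm C (psiMap s f) = ∑ i ∈ C, lamForm (s i) f := by
      rw [omegaForm, hint, Finset.card_filter]
      push_cast
      refine Finset.sum_congr rfl fun i _ => ?_
      rcases zmod2_cases (lamForm (s i) f) with h | h <;> simp [h]
    rw [this, ← hsum, hC, lamForm_zero_left]
  · intro h
    -- linear maps
    set N : (ι → ZMod 2) →ₗ[ZMod 2] (Finset Q × Finset Q) :=
      Fintype.linearCombination (ZMod 2) s with hN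
    set M : (Finset Q × Finset Q) →ₗ[ZMod 2] (ι → ZMod 2) :=
      LinearMap.pi (fun i => lamBilin Q (s i)) with hM
    have key1 : ∀ (c : ι → ZMod 2) (f : Finset Q × Finset Q),
        dotBilin ι (M f) c = lamForm (N c) f := by
      intro c f
      have : lamBilin Q (N c) f = ∑ i, c i * lamForm (s i) f := by
        rw [hN, Fintype.linearCombination_apply, map_sum, LinearMap.sum_apply]
        refine Finset.sum_congr rfl fun i _ => ?_
        rw [map_smul]
        simp [smul_eq_mul]
      rw [← lamBilin_apply, this, dotBilin_apply]
      exact Finset.sum_congr rfl fun i _ => by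
        simp [hM, LinearMap.pi_apply, mul_comm]
    have key_orth : (dotBilin ι).orthogonal (LinearMap.range M) = LinearMap.ker N := by
      ext c
      rw [LinearMap.BilinForm.mem_orthogonal_iff, LinearMap.mem_ker]
      constructor
      · intro hc
        refine lamForm_nondeg _ fun f => ?_
        rw [← key1 c f]
        exact hc (M f) ⟨f, rfl⟩
      · rintro hc n ⟨f, rfl⟩
        show dotBilin ι (M f) c = 0
        rw [key1, hc, lamForm_zero_left]
    have hrange : LinearMap.range M = (dotBilin ι).orthogonal (LinearMap.ker N) := by
      rw [← key_orth,
        LinearMap.BilinForm.orthogonal_orthogonal (dotBilin_nondeg ι) (dotBilin_refl ι)]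
    -- indicator of J
    set χ : ι → ZMod 2 := fun i => if i ∈ J then 1 else 0 with hχ
    have hmem : χ ∈ LinearMap.range M := by
      rw [hrange]
      intro c hc
      rw [LinearMap.mem_ker] at hc
      set C : Finset ι := Finset.univ.filter fun i => c i = 1 with hCdef
      have hphi : phiMap s C = N c := by
        rw [phiMap, hN, Fintype.linearCombination_apply, Finset.sum_filter]
        refine Finset.sum_congr rfl fun i _ => ?_
        rcases zmod2_cases (c i) with h0 | h1
        · simp [h0]
        · simp [h1]
      have homega : dotBilin ι c χ = omegaForm C J := by
        have hint : C ∩ J = J.filter fun i => c i = 1 := by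
          ext i; simp [hCdef, Finset.mem_filter, and_comm]
        rw [omegaForm, hint, Finset.card_filter, dotBilin_apply]
        push_cast
        rw [show (∑ i, c i * χ i) = ∑ i ∈ J, c i by
          rw [hχ]
          simp only [mul_ite, mul_one, mul_zero]
          rw [Finset.sum_ite_mem, Finset.univ_inter]]
        refine Finset.sum_congr rfl fun i _ => ?_
        rcases zmod2_cases (c i) with hci | hci <;> simp [hci]
      show dotBilin ι c χ = 0
      rw [homega]
      exact h C (hphi.trans hc)
    obtain ⟨f, hf⟩ := hmem
    refine ⟨f, ?_⟩
    ext i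
    have hfi : lamForm (s i) f = χ i := by
      have := congrFun hf i
      simpa [hM, LinearMap.pi_apply] using this
    simp only [psiMap, Finset.mem_filter, Finset.mem_univ, true_and, hfi, hχ]
    by_cases hiJ : i ∈ J <;> simp [hiJ]
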